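/- The number of integer partitions of n with at most k parts is asymptotically equivalent to n^(k-1)/((k-1)! · k!) as n tends to infinity. -/

import Mathlib

open Filter Finset

def vm {k : ℕ} (f : Fin k → ℕ) : Multiset ℕ := (List.ofFn f : List ℕ)

lemma vm_card {k : ℕ} (f : Fin k → ℕ) : Multiset.card (vm f) = k := by simp [vm]

lemma vm_sum {k : ℕ} (f : Fin k → ℕ) : (vm f).sum = ∑ i, f i := by
  simp [vm, Multiset.sum_coe, List.sum_ofFn]

lemma vm_comp_perm {k : ℕ} (f : Fin k → ℕ) (σ : Equiv.Perm (Fin k)) :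
    vm (f ∘ σ) = vm f := by
  simpa [vm, Multiset.coe_eq_coe] using σ.ofFn_comp_perm f

lemma monotone_vm_inj {k : ℕ} {f g : Fin k → ℕ} (hf : Monotone f) (hg : Monotone g)
    (h : vm f = vm g) : f = g := by
  rw [vm, vm, Multiset.coe_eq_coe] at h
  exact List.ofFn_inj.mp (List.Perm.eq_of_sortedLE
    (List.sortedLE_ofFn_iff.mpr hf) (List.sortedLE_ofFn_iff.mpr hg) h)

lemma exists_perm_of_vm_eq {k : ℕ} {f g : Fin k → ℕ} (h : vm f = vm g) :
    ∃ σ : Equiv.Perm (Fin k), f = g ∘ σ := by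
  have h1 : vm (f ∘ Tuple.sort f) = vm (g ∘ Tuple.sort g) := by
    rw [vm_comp_perm, vm_comp_perm, h]
  have h2 := monotone_vm_inj (Tuple.monotone_sort f) (Tuple.monotone_sort g) h1
  refine ⟨(Tuple.sort f).symm.trans (Tuple.sort g), ?_⟩
  funext i
  have := congrFun h2 ((Tuple.sort f).symm i)
  simpa using this

def tupD (k : ℕ) (M : Multiset ℕ) : Fin k → ℕ := fun i => (M.sort (· ≤ ·)).getD i 0

lemma ofFn_tupD {k : ℕ} {M : Multiset ℕ} (h : Multiset.card M = k) :
    List.ofFn (tupD k M) = M.sort (· ≤ ·) := by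
  apply List.ext_get
  · simp [Multiset.length_sort, h]
  · intro i h1 h2
    simp only [tupD, List.get_ofFn]
    rw [List.getD_eq_getElem]
    · congr 1
    · simpa using h2

lemma vm_tupD {k : ℕ} {M : Multiset ℕ} (h : Multiset.card M = k) : vm (tupD k M) = M := by
  rw [vm, ofFn_tupD h, Multiset.sort_eq]

lemma monotone_tupD {k : ℕ} {M : Multiset ℕ} (h : Multiset.card M = k) :
    Monotone (tupD k M) := by
  rw [← List.sortedLE_ofFn_iff, ofFn_tupD h]
  exact (Multiset.pairwise_sort M _).sortedLE

-- padded multiset of a partition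
def pad (k : ℕ) {n : ℕ} (p : Nat.Partition n) : Multiset ℕ :=
  p.parts + Multiset.replicate (k - Multiset.card p.parts) 0

lemma pad_card {k n : ℕ} (p : Nat.Partition n) (h : Multiset.card p.parts ≤ k) :
    Multiset.card (pad k p) = k := by
  simp [pad, Multiset.card_replicate]; omega

lemma pad_sum {k n : ℕ} (p : Nat.Partition n) : (pad k p).sum = n := by
  simp [pad, Multiset.sum_replicate, p.parts_sum]

lemma pad_filter {k n : ℕ} (p : Nat.Partition n) :
    (pad k p).filter (· ≠ 0) = p.parts := by
  rw [pad, Multiset.filter_add]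
  have h1 : p.parts.filter (· ≠ 0) = p.parts := by
    rw [Multiset.filter_eq_self]
    intro a ha
    exact (p.parts_pos ha).ne'
  have h2 : (Multiset.replicate (k - Multiset.card p.parts) 0).filter (· ≠ (0:ℕ)) = 0 := by
    rw [Multiset.filter_eq_nil]
    intro a ha
    simp [Multiset.eq_of_mem_replicate ha]
  rw [h1, h2, add_zero]

lemma pad_inj {k n : ℕ} {p q : Nat.Partition n} (h : pad k p = pad k q) : p = q := by
  ext1
  rw [← pad_filter (k := k) p, ← pad_filter (k := k) q, h]

-- LOWER BOUND
lemma lower_bound (k n : ℕ) (hk : 0 < k) :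
    (Finset.Nat.antidiagonalTuple k n).card ≤
      k.factorial * (Finset.univ.filter (fun p : Nat.Partition n => p.parts.card ≤ k)).card := by
  classical
  set T := Finset.univ.filter (fun p : Nat.Partition n => p.parts.card ≤ k) with hT
  set T' := T.image (fun p => p.parts) with hT'
  have hcard : T'.card = T.card := by
    apply Finset.card_image_of_injOn
    intro p _ q _ h
    exact Nat.Partition.ext h
  rw [← hcard]
  apply Finset.card_le_mul_card_image_of_maps_to
    (f := fun f => (vm f).filter (· ≠ 0)) ?_ _ ?_
  · -- maps to
    intro f hf
    rw [Finset.Nat.mem_antidiagonalTuple] at hf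
    have hs : (vm f).sum = n := by rw [vm_sum]; exact hf
    refine Finset.mem_image.mpr ⟨Nat.Partition.ofSums n (vm f) hs, ?_, rfl⟩
    rw [hT, Finset.mem_filter]
    refine ⟨Finset.mem_univ _, ?_⟩
    calc Multiset.card ((vm f).filter (· ≠ 0)) ≤ Multiset.card (vm f) :=
          Multiset.card_le_card (Multiset.filter_le _ _)
      _ = k := vm_card f
  · -- fibers
    intro b hb
    set F := Finset.Nat.antidiagonalTuple k n |>.filter (fun f => (vm f).filter (· ≠ 0) = b)
      with hF
    show F.card ≤ k.factorial
    rcases Finset.eq_empty_or_nonempty F with h | ⟨f0, hf0⟩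
    · simp [h]
    have key : ∀ f ∈ F, vm f = vm f0 := by
      have hf0' := (Finset.mem_filter.mp hf0).2
      intro f hf
      have hf' := (Finset.mem_filter.mp hf).2
      have hsplit : ∀ g : Fin k → ℕ, vm g = (vm g).filter (· ≠ 0) +
          Multiset.replicate (k - Multiset.card ((vm g).filter (· ≠ 0))) 0 := by
        intro g
        have h1 := (Multiset.filter_add_not (· ≠ 0) (vm g)).symm
        have h2 : (vm g).filter (fun x => ¬ x ≠ 0) =
            Multiset.replicate (Multiset.card ((vm g).filter (fun x => ¬ x ≠ 0))) 0 := by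
          rw [Multiset.eq_replicate_card]
          intro x hx
          have := Multiset.of_mem_filter hx
          simpa using this
        have h4 := congrArg Multiset.card (Multiset.filter_add_not (· ≠ 0) (vm g))
        rw [Multiset.card_add, vm_card] at h4
        have h3 : Multiset.card ((vm g).filter (fun x => ¬ x ≠ 0)) =
            k - Multiset.card ((vm g).filter (· ≠ 0)) := by omega
        rw [h3] at h2
        rw [← h2]
        exact h1
      rw [hsplit f, hsplit f0, hf', hf0']
    have hsub : F ⊆ Finset.image (fun σ : Equiv.Perm (Fin k) => f0 ∘ ⇑σ) Finset.univ := by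
      intro f hf
      obtain ⟨σ, hσ⟩ := exists_perm_of_vm_eq (key f hf)
      exact Finset.mem_image.mpr ⟨σ, Finset.mem_univ _, hσ.symm⟩
    calc F.card ≤ _ := Finset.card_le_card hsub
      _ ≤ (Finset.univ : Finset (Equiv.Perm (Fin k))).card := Finset.card_image_le
      _ = k.factorial := by rw [Finset.card_univ, Fintype.card_perm, Fintype.card_fin]

-- staircase tuple of a partition
def stair (k : ℕ) {n : ℕ} (p : Nat.Partition n) : Fin k → ℕ :=
  fun i => tupD k (pad k p) i + i

lemma strictMono_stair {k n : ℕ} (p : Nat.Partition n) (h : Multiset.card p.parts ≤ k) :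
    StrictMono (stair k p) := by
  intro i j hij
  have := monotone_tupD (pad_card p h) hij.le
  simp only [stair]
  have : (i : ℕ) < j := hij
  omega

lemma sum_stair {k n : ℕ} (p : Nat.Partition n) (h : Multiset.card p.parts ≤ k) :
    ∑ i, stair k p i = n + (k * (k-1))/2 := by
  have h1 : ∑ i : Fin k, tupD k (pad k p) i = n := by
    rw [← vm_sum, vm_tupD (pad_card p h), pad_sum]
  have h2 : ∑ i : Fin k, (i : ℕ) = (k * (k-1))/2 := by
    rw [show (∑ i : Fin k, (i:ℕ)) = ∑ i ∈ Finset.range k, i from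
      Fin.sum_univ_eq_sum_range (fun i => (i:ℕ)) k, Finset.sum_range_id]
  simp only [stair]
  rw [Finset.sum_add_distrib, h1, h2]

-- UPPER BOUND
lemma upper_bound (k n : ℕ) (hk : 0 < k) :
    (Finset.univ.filter (fun p : Nat.Partition n => p.parts.card ≤ k)).card * k.factorial ≤
      (Finset.Nat.antidiagonalTuple k (n + (k * (k-1))/2)).card := by
  classical
  set T := Finset.univ.filter (fun p : Nat.Partition n => p.parts.card ≤ k) with hT
  have hcard : (T ×ˢ (Finset.univ : Finset (Equiv.Perm (Fin k)))).card = T.card * k.factorial := by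
    rw [Finset.card_product, Finset.card_univ, Fintype.card_perm, Fintype.card_fin]
  rw [← hcard]
  apply Finset.card_le_card_of_injOn (fun x : Nat.Partition n × Equiv.Perm (Fin k) => stair k x.1 ∘ ⇑x.2)
  · rintro ⟨p, σ⟩ hx
    have hp : Multiset.card p.parts ≤ k := (Finset.mem_filter.mp (Finset.mem_product.mp hx).1).2
    rw [Finset.mem_coe, Finset.Nat.mem_antidiagonalTuple]
    show ∑ i, stair k p (σ i) = _
    rw [Equiv.sum_comp σ (stair k p)]
    exact sum_stair p hp
  · rintro ⟨p, σ⟩ hx ⟨q, τ⟩ hy hxy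
    simp only [Finset.coe_filter, Finset.mem_coe] at hx hy
    have hp : Multiset.card p.parts ≤ k := by
      have := (Finset.mem_product.mp hx).1; rw [hT, Finset.mem_filter] at this; exact this.2
    have hq : Multiset.card q.parts ≤ k := by
      have := (Finset.mem_product.mp hy).1; rw [hT, Finset.mem_filter] at this; exact this.2
    have hvm : vm (stair k p) = vm (stair k q) := by
      rw [← vm_comp_perm (stair k p) σ, ← vm_comp_perm (stair k q) τ]
      exact congrArg vm hxy
    have hst : stair k p = stair k q :=
      monotone_vm_inj (strictMono_stair p hp).monotone (strictMono_stair q hq).monotone hvm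
    have htup : tupD k (pad k p) = tupD k (pad k q) := by
      funext i
      have := congrFun hst i
      simp only [stair] at this
      omega
    have hpq : p = q := by
      apply pad_inj (k := k)
      rw [← vm_tupD (pad_card p hp), ← vm_tupD (pad_card q hq), htup]
    subst hpq
    have hστ : σ = τ := by
      apply Equiv.ext
      intro i
      have h5 : stair k p (σ i) = stair k p (τ i) := congrFun hxy i
      exact (strictMono_stair p hp).injective h5
    rw [hστ]

lemma card_adT (k n : ℕ) (hk : 0 < k) :
    (Finset.Nat.antidiagonalTuple k n).card = (n + k - 1).choose (k - 1) := by
  have e1 : Sym (Fin k) n ≃ {f : Fin k → ℕ // f ∈ Finset.Nat.antidiagonalTuple k n} :=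
    (Sym.equivNatSumOfFintype (Fin k) n).trans
      (Equiv.subtypeEquivRight (fun f => (Finset.Nat.mem_antidiagonalTuple).symm))
  have h1 : (Finset.Nat.antidiagonalTuple k n).card = Fintype.card (Sym (Fin k) n) := by
    rw [Fintype.card_congr e1, Fintype.card_coe]
  rw [h1, Sym.card_sym_eq_choose]
  rw [Fintype.card_fin]
  have h2 : k + n - 1 = n + k - 1 := by omega
  rw [h2]
  exact Nat.choose_symm_of_eq_add (by omega)

lemma tendsto_ratio (c : ℕ) :
    Tendsto (fun n : ℕ => ((n + c : ℕ) : ℝ) / (n : ℝ)) atTop (nhds 1) := by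
  have h1 : Tendsto (fun n : ℕ => 1 + (c:ℝ) / n) atTop (nhds 1) := by
    have := tendsto_const_div_atTop_nhds_zero_nat (c:ℝ)
    have h2 := this.const_add 1
    simpa using h2
  apply h1.congr'
  filter_upwards [eventually_ge_atTop 1] with n hn
  have hn' : (n:ℝ) ≠ 0 := by positivity
  push_cast
  field_simp

lemma tendsto_choose_mul (k a : ℕ) (hk : 0 < k) (ha : k - 1 ≤ a) :
    Tendsto (fun n : ℕ => (((n + a).choose (k-1) * (k-1).factorial : ℕ) : ℝ) / (n : ℝ) ^ (k-1))
      atTop (nhds 1) := by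
  have key : Tendsto (fun n : ℕ => ∏ i ∈ range (k-1), (((n + (a - i) : ℕ)):ℝ) / (n:ℝ))
      atTop (nhds 1) := by
    have h := tendsto_finset_prod (range (k-1))
      (fun i _ => tendsto_ratio (a - i))
    simpa using h
  apply key.congr'
  filter_upwards [eventually_ge_atTop 1] with n hn
  have hn' : (n:ℝ) ≠ 0 := by
    simp only [ne_eq, Nat.cast_eq_zero]; omega
  have hdesc : (n + a).choose (k-1) * (k-1).factorial = (n+a).descFactorial (k-1) := by
    rw [Nat.descFactorial_eq_factorial_mul_choose, Nat.mul_comm]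
  rw [hdesc, Nat.descFactorial_eq_prod_range]
  have hterm : ∀ i ∈ range (k-1), (n + a - i) = n + (a - i) := by
    intro i hi
    rw [mem_range] at hi
    omega
  rw [Finset.prod_congr rfl hterm]
  push_cast
  rw [Finset.prod_div_distrib]
  congr 1
  rw [Finset.prod_const]
  rw [Finset.card_range]


theorem partitions_at_most_k_parts_asymptotic (k : ℕ) (hk : 0 < k) :
    Tendsto (fun n : ℕ =>
        ((Finset.univ.filter (fun p : Nat.Partition n => p.parts.card ≤ k)).card : ℝ)
          * (k - 1).factorial * k.factorial / (n : ℝ) ^ (k - 1))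
      atTop (nhds 1) := by
  set D := k * (k - 1) / 2 with hD
  have hlow := tendsto_choose_mul k (k - 1) hk le_rfl
  have hupp := tendsto_choose_mul k (D + k - 1) hk (by omega)
  apply tendsto_of_tendsto_of_tendsto_of_le_of_le' hlow hupp
  · -- lower ≤ F
    filter_upwards with n
    set P := (Finset.univ.filter (fun p : Nat.Partition n => p.parts.card ≤ k)).card with hP
    have hnneg : (0:ℝ) ≤ (n:ℝ) ^ (k-1) := by positivity
    apply div_le_div_of_nonneg_right ?_ hnneg
    have hnat : (n + (k-1)).choose (k-1) * (k-1).factorial ≤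
        (k.factorial * P) * (k-1).factorial := by
      apply Nat.mul_le_mul_right
      rw [show n + (k-1) = n + k - 1 from by omega, ← card_adT k n hk]
      exact lower_bound k n hk
    calc (((n + (k-1)).choose (k-1) * (k-1).factorial : ℕ) : ℝ)
        ≤ (((k.factorial * P) * (k-1).factorial : ℕ) : ℝ) := by exact_mod_cast hnat
      _ = (P:ℝ) * (k-1).factorial * k.factorial := by push_cast; ring
  · -- F ≤ upper
    filter_upwards with n
    set P := (Finset.univ.filter (fun p : Nat.Partition n => p.parts.card ≤ k)).card with hP
    have hnneg : (0:ℝ) ≤ (n:ℝ) ^ (k-1) := by positivity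
    apply div_le_div_of_nonneg_right ?_ hnneg
    have hnat : (P * k.factorial) * (k-1).factorial ≤
        (n + (D + k - 1)).choose (k-1) * (k-1).factorial := by
      apply Nat.mul_le_mul_right
      rw [show n + (D + k - 1) = (n + D) + k - 1 from by omega, ← card_adT k (n + D) hk]
      exact upper_bound k n hk
    calc (P:ℝ) * (k-1).factorial * k.factorial
        = (((P * k.factorial) * (k-1).factorial : ℕ) : ℝ) := by push_cast; ring
      _ ≤ (((n + (D + k - 1)).choose (k-1) * (k-1).factorial : ℕ) : ℝ) := by exact_mod_cast hnat
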